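/- There do not exist rational numbers x, y, t such that x^2 + y^2 = (3 - t^2)*(t^2 - 2), although there do exist real numbers x, y, t satisfying this equation. -/

import Mathlib

/-- squares mod 4 -/
lemma aux_sq_mod_four (a : ℕ) : a ^ 2 % 4 = 0 ∨ a ^ 2 % 4 = 1 := by
  rw [Nat.pow_mod]
  have h : a % 4 < 4 := Nat.mod_lt _ (by norm_num)
  interval_cases h : a % 4 <;> norm_num

lemma aux_sum_sq_mod4 {w a b : ℕ} (h : w = a ^ 2 + b ^ 2) : w % 4 ≠ 3 := by
  rcases aux_sq_mod_four a with h1 | h1 <;> rcases aux_sq_mod_four b with h2 | h2 <;> omega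

/-- Key lemma: if c^2 * (M*N) is a sum of two squares with M, N coprime positive,
then M % 4 ≠ 3. -/
lemma aux_key {c M N : ℕ} (hc : c ≠ 0) (hM : M ≠ 0) (hN : N ≠ 0)
    (hco : Nat.Coprime M N) (h : ∃ a b : ℕ, c ^ 2 * (M * N) = a ^ 2 + b ^ 2) :
    M % 4 ≠ 3 := by
  intro hM4
  have hval : ∀ {q : ℕ}, q.Prime → q % 4 = 3 → Even (padicValNat q (c ^ 2 * (M * N))) :=
    fun {q} hq hq4 => by
      by_cases hd : q ∣ c ^ 2 * (M * N)
      · exact Nat.eq_sq_add_sq_iff.mp h q (Nat.mem_primeFactors.mpr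
          ⟨hq, hd, mul_ne_zero (pow_ne_zero _ hc) (mul_ne_zero hM hN)⟩) hq4
      · haveI : Fact q.Prime := ⟨hq⟩
        rw [padicValNat.eq_zero_of_not_dvd hd]
        exact Even.zero
  have hMss : ∃ a b : ℕ, M = a ^ 2 + b ^ 2 := by
    rw [Nat.eq_sq_add_sq_iff]
    intro q hqm hq4
    have hq : q.Prime := Nat.prime_of_mem_primeFactors hqm
    haveI : Fact q.Prime := ⟨hq⟩
    by_cases hdvd : q ∣ M
    · have hnd : ¬ q ∣ N := fun hdN => hq.one_lt.ne' (Nat.eq_one_of_dvd_coprimes hco hdvd hdN)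
      have hvN : padicValNat q N = 0 := padicValNat.eq_zero_of_not_dvd hnd
      have := hval hq hq4
      rw [padicValNat.mul (pow_ne_zero _ hc) (mul_ne_zero hM hN),
        padicValNat.mul hM hN, padicValNat.pow _ _, hvN] at this
      rw [Nat.even_iff] at this ⊢
      omega
    · rw [padicValNat.eq_zero_of_not_dvd hdvd]
      exact Even.zero
  obtain ⟨a, b, hab⟩ := hMss
  exact aux_sum_sq_mod4 hab hM4

/-- no rational square root of 2 or 3 -/
lemma aux_no_rat_sqrt {p : ℕ} (hp : Nat.Prime p) (t : ℚ) : t ^ 2 ≠ (p : ℚ) := by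
  intro h
  have hcast : ((t : ℝ)) ^ 2 = (p : ℝ) := by exact_mod_cast congrArg (Rat.cast (K := ℝ)) h
  have h2 : ((|t| : ℚ) : ℝ) = Real.sqrt p := by
    rw [Rat.cast_abs, ← Real.sqrt_sq_eq_abs, hcast]
  exact hp.irrational_sqrt ⟨|t|, h2⟩

theorem chatelet_surface_no_rational_points_but_real_points :
    (¬ ∃ x y t : ℚ, x ^ 2 + y ^ 2 = (3 - t ^ 2) * (t ^ 2 - 2)) ∧
    (∃ x y t : ℝ, x ^ 2 + y ^ 2 = (3 - t ^ 2) * (t ^ 2 - 2)) := by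
  constructor
  · rintro ⟨x, y, t, h⟩
    -- integer data for t
    set p : ℤ := t.num with hp
    set q : ℤ := (t.den : ℤ) with hq
    have hq0 : (0:ℤ) < q := by rw [hq]; exact_mod_cast t.den_pos
    have hqQ : ((q : ℚ)) ≠ 0 := by positivity
    have htq : (q : ℚ) * t = (p : ℚ) := by
      rw [hp, hq]
      push_cast
      rw [mul_comm]
      exact_mod_cast Rat.mul_den_eq_num t
    set m : ℤ := 3 * q ^ 2 - p ^ 2 with hm
    set n : ℤ := p ^ 2 - 2 * q ^ 2 with hn
    -- the scaled equation over ℚ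
    have key : (x * (q:ℚ) ^ 2) ^ 2 + (y * (q:ℚ) ^ 2) ^ 2 = ((m * n : ℤ) : ℚ) := by
      push_cast [hm, hn]
      have hP : ((p : ℤ) : ℚ) = (q:ℚ) * t := htq.symm
      rw [hP]
      linear_combination ((q:ℚ))^4 * h
    -- coprimality of p and q
    have hcopq : IsCoprime p q := by
      rw [Int.isCoprime_iff_gcd_eq_one]
      exact t.reduced
    -- m*n ≠ 0
    have hm0 : m ≠ 0 := by
      intro h0
      apply aux_no_rat_sqrt (by norm_num : Nat.Prime 3) t
      have : (p:ℚ) ^ 2 = 3 * (q:ℚ) ^ 2 := by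
        have : ((3 * q ^ 2 - p ^ 2 : ℤ) : ℚ) = 0 := by rw [← hm, h0]; norm_num
        push_cast at this; linarith
      rw [← htq] at this
      have h2 : (q:ℚ) ^ 2 * t ^ 2 = (q:ℚ) ^ 2 * 3 := by linear_combination this
      have := mul_left_cancel₀ (pow_ne_zero 2 hqQ) h2
      exact_mod_cast this
    have hn0 : n ≠ 0 := by
      intro h0
      apply aux_no_rat_sqrt (by norm_num : Nat.Prime 2) t
      have : (p:ℚ) ^ 2 = 2 * (q:ℚ) ^ 2 := by
        have : ((p ^ 2 - 2 * q ^ 2 : ℤ) : ℚ) = 0 := by rw [← hn, h0]; norm_num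
        push_cast at this; linarith
      rw [← htq] at this
      have h2 : (q:ℚ) ^ 2 * t ^ 2 = (q:ℚ) ^ 2 * 2 := by linear_combination this
      have := mul_left_cancel₀ (pow_ne_zero 2 hqQ) h2
      exact_mod_cast this
    -- m*n ≥ 0, hence > 0, hence m > 0 and n > 0
    have hmn_pos : 0 < m * n := by
      rcases lt_or_eq_of_le (show (0:ℤ) ≤ m * n by
        have : (0:ℚ) ≤ ((m * n : ℤ) : ℚ) := key ▸ by positivity
        exact_mod_cast this) with h' | h'
      · exact h'
      · exact absurd h'.symm (mul_ne_zero hm0 hn0)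
    have hmpos : 0 < m ∧ 0 < n := by
      rcases mul_pos_iff.mp hmn_pos with ⟨h1, h2⟩ | ⟨h1, h2⟩
      · exact ⟨h1, h2⟩
      · exfalso; nlinarith [sq_nonneg p, sq_nonneg q, hq0]
    -- coprimality of m and n
    have hcomn : IsCoprime m n := by
      obtain ⟨u, v, huv⟩ := (hcopq.pow (n := 2) (m := 2))
      exact ⟨2 * u + v, 3 * u + v, by linear_combination huv⟩
    -- integer sum of squares equation
    set u : ℚ := x * (q:ℚ) ^ 2 with hu
    set v : ℚ := y * (q:ℚ) ^ 2 with hv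
    set U : ℤ := u.num * (v.den : ℤ) with hU
    set V : ℤ := v.num * (u.den : ℤ) with hV
    set d : ℤ := (u.den : ℤ) * (v.den : ℤ) with hd
    have hd0 : d ≠ 0 := by
      rw [hd]; positivity
    have hZ : U ^ 2 + V ^ 2 = d ^ 2 * (m * n) := by
      have hUQ : ((U : ℤ) : ℚ) = (d : ℚ) * u := by
        rw [hU, hd]; push_cast
        rw [show (u.num : ℚ) = u * u.den by exact_mod_cast (Rat.mul_den_eq_num u).symm]
        ring
      have hVQ : ((V : ℤ) : ℚ) = (d : ℚ) * v := by
        rw [hV, hd]; push_cast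
        rw [show (v.num : ℚ) = v * v.den by exact_mod_cast (Rat.mul_den_eq_num v).symm]
        ring
      have : ((U ^ 2 + V ^ 2 : ℤ) : ℚ) = ((d ^ 2 * (m * n) : ℤ) : ℚ) := by
        push_cast at key
        push_cast [hUQ, hVQ]
        linear_combination ((d:ℚ))^2 * key
      exact_mod_cast this
    -- pass to ℕ
    have hNat : d.natAbs ^ 2 * (m.natAbs * n.natAbs) = U.natAbs ^ 2 + V.natAbs ^ 2 := by
      have : (d ^ 2 * (m * n)).natAbs = (U ^ 2 + V ^ 2).natAbs := by rw [hZ]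
      rw [Int.natAbs_mul, Int.natAbs_mul, Int.natAbs_pow] at this
      rw [this]
      have hU2 : (0:ℤ) ≤ U ^ 2 := sq_nonneg _
      have hV2 : (0:ℤ) ≤ V ^ 2 := sq_nonneg _
      zify [Int.natAbs_of_nonneg (add_nonneg hU2 hV2)]
      push_cast [sq_abs]
      ring
    have hcoNat : Nat.Coprime m.natAbs n.natAbs :=
      Int.isCoprime_iff_gcd_eq_one.mp hcomn
    -- mod 4 analysis: one of m, n ≡ 3 mod 4
    have hmod : m.natAbs % 4 = 3 ∨ n.natAbs % 4 = 3 := by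
      have hmabs : (m.natAbs : ℤ) = m := Int.natAbs_of_nonneg hmpos.1.le
      have hnabs : (n.natAbs : ℤ) = n := Int.natAbs_of_nonneg hmpos.2.le
      have h4 : m % 4 = 3 ∨ n % 4 = 3 := by
        rcases Int.even_or_odd p with ⟨a, ha⟩ | ⟨a, ha⟩
        · -- p even, so q odd
          rcases Int.even_or_odd q with ⟨b, hb⟩ | ⟨b, hb⟩
          · exfalso
            have : ¬ IsUnit (2:ℤ) := by norm_num [Int.isUnit_iff]
            exact this (hcopq.isUnit_of_dvd' ⟨a, by omega⟩ ⟨b, by omega⟩)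
          · left
            have : m = 4 * (3 * b ^ 2 + 3 * b - a ^ 2) + 3 := by rw [hm, ha, hb]; ring
            omega
        · rcases Int.even_or_odd q with ⟨b, hb⟩ | ⟨b, hb⟩
          · left
            have : m = 4 * (3 * b ^ 2 - a ^ 2 - a) - 1 := by rw [hm, ha, hb]; ring
            omega
          · right
            have : n = 4 * (a ^ 2 + a - 2 * b ^ 2 - 2 * b) - 1 := by rw [hn, ha, hb]; ring
            omega
      rcases h4 with h4 | h4
      · left; omega
      · right; omega
    have hdabs : d.natAbs ≠ 0 := Int.natAbs_ne_zero.mpr hd0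
    have hmabs0 : m.natAbs ≠ 0 := Int.natAbs_ne_zero.mpr hm0
    have hnabs0 : n.natAbs ≠ 0 := Int.natAbs_ne_zero.mpr hn0
    rcases hmod with h3 | h3
    · exact aux_key hdabs hmabs0 hnabs0 hcoNat ⟨U.natAbs, V.natAbs, hNat⟩ h3
    · exact aux_key hdabs hnabs0 hmabs0 hcoNat.symm
        ⟨U.natAbs, V.natAbs, by rw [mul_comm n.natAbs]; exact hNat⟩ h3
  · refine ⟨1/2, 0, Real.sqrt (5/2), ?_⟩
    rw [Real.sq_sqrt (by norm_num : (0:ℝ) ≤ 5/2)]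
    norm_num
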